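/- Let f ∈ L²(ℝ²) have compact support and suppose the X-ray transform of f vanishes on all lines in an open set A of lines such that every line in A can be continuously deformed within A to a line disjoint from supp f. Assume further the microlocal regularity input: for every line ℓ ∈ A on which all nearby X-ray integrals of f vanish, the analytic wavefront set of f contains no conormal direction to ℓ. Then f = 0 on the union of the lines in A. -/

import Mathlib

open scoped RealInnerProductSpace

open Set

/-- The 90-degree rotation of a vector in `ℝ²`. -/
noncomputable def xrayNu (ω : EuclideanSpace ℝ (Fin 2)) : EuclideanSpace ℝ (Fin 2) :=
  EuclideanSpace.single 0 (-(ω 1)) + EuclideanSpace.single 1 (ω 0)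

lemma xrayNu_inner (ω v : EuclideanSpace ℝ (Fin 2)) :
    ⟪xrayNu ω, v⟫ = -(ω 1) * v 0 + ω 0 * v 1 := by
  simp [xrayNu, inner_add_left, EuclideanSpace.inner_single_left]

lemma xrayNu_apply0 (ω : EuclideanSpace ℝ (Fin 2)) : xrayNu ω 0 = -(ω 1) := by
  simp [xrayNu, EuclideanSpace.single_apply]

lemma xrayNu_apply1 (ω : EuclideanSpace ℝ (Fin 2)) : xrayNu ω 1 = ω 0 := by
  simp [xrayNu, EuclideanSpace.single_apply]

lemma xray_sq_sum (ω : EuclideanSpace ℝ (Fin 2)) (h : ‖ω‖ = 1) :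
    ω 0 ^ 2 + ω 1 ^ 2 = 1 := by
  have h2 : ⟪ω, ω⟫ = 1 := by rw [real_inner_self_eq_norm_sq, h]; norm_num
  rw [PiLp.inner_apply] at h2
  simp only [RCLike.inner_apply, starRingEnd_apply, star_trivial, Fin.sum_univ_two] at h2
  nlinarith [h2]

lemma xrayNu_norm (ω : EuclideanSpace ℝ (Fin 2)) (h : ‖ω‖ = 1) : ‖xrayNu ω‖ = 1 := by
  have h1 : ⟪xrayNu ω, xrayNu ω⟫ = 1 := by
    rw [xrayNu_inner, xrayNu_apply0, xrayNu_apply1]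
    have := xray_sq_sum ω h
    nlinarith
  have h3 := real_inner_self_eq_norm_sq (xrayNu ω)
  nlinarith [norm_nonneg (xrayNu ω), h3.symm.trans h1]

lemma xrayNu_ne_zero (ω : EuclideanSpace ℝ (Fin 2)) (h : ‖ω‖ = 1) : xrayNu ω ≠ 0 := by
  intro h0
  have := xrayNu_norm ω h
  rw [h0] at this; simp at this

lemma xrayNu_inner_self (ω : EuclideanSpace ℝ (Fin 2)) : ⟪xrayNu ω, ω⟫ = 0 := by
  rw [xrayNu_inner]; ring

lemma xrayNu_continuous : Continuous xrayNu := by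
  have : xrayNu = fun ω : EuclideanSpace ℝ (Fin 2) =>
      (-(ω 1)) • (EuclideanSpace.single (0 : Fin 2) (1:ℝ)) +
        (ω 0) • EuclideanSpace.single 1 1 := by
    funext ω
    ext i
    have hs : ∀ (i j : Fin 2) (a : ℝ),
        EuclideanSpace.single i a j = a * EuclideanSpace.single i (1:ℝ) j := by
      intro i j a
      simp only [EuclideanSpace.single_apply]
      split <;> simp
    fin_cases i
    · show xrayNu ω 0 = -ω 1 * EuclideanSpace.single (0:Fin 2) (1:ℝ) 0
        + ω 0 * EuclideanSpace.single (1:Fin 2) (1:ℝ) 0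
    
      rw [xrayNu_apply0, ← hs, ← hs, EuclideanSpace.single_apply, EuclideanSpace.single_apply]
      norm_num
    · show xrayNu ω 1 = -ω 1 * EuclideanSpace.single (0:Fin 2) (1:ℝ) 1
        + ω 0 * EuclideanSpace.single (1:Fin 2) (1:ℝ) 1
      rw [xrayNu_apply1, ← hs, ← hs, EuclideanSpace.single_apply, EuclideanSpace.single_apply]
      norm_num
  rw [this]
  exact (((EuclideanSpace.proj (1:Fin 2)).continuous.neg).smul continuous_const).add
    ((EuclideanSpace.proj (0:Fin 2)).continuous.smul continuous_const)

/-- A vector orthogonal to `xrayNu ω` is a multiple of `ω` (for unit `ω`). -/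
lemma xray_decomp (ω v : EuclideanSpace ℝ (Fin 2)) (h1 : ‖ω‖ = 1)
    (h : ⟪xrayNu ω, v⟫ = 0) : v = (ω 0 * v 0 + ω 1 * v 1) • ω := by
  have hs := xray_sq_sum ω h1
  rw [xrayNu_inner] at h
  ext i
  fin_cases i
  · show v 0 = (ω 0 * v 0 + ω 1 * v 1) * ω 0
    linear_combination (-(v 0)) * hs - ω 1 * h
  · show v 1 = (ω 0 * v 0 + ω 1 * v 1) * ω 1
    linear_combination (-(v 1)) * hs + ω 0 * h

/-- Support theorem for the X-ray transform in ℝ² (the Euclidean model of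
Theorem 1). Lines are parameterized by `ℓ = (z, ω)` with `‖ω‖ = 1`, `t ↦ z + t • ω`.
`f ∈ L²` has compact support, its X-ray transform vanishes on an open set `A` of lines,
each line of `A` can be deformed within `A` to a line disjoint from `supp f`, and we
assume the microlocal regularity input (analytic wavefront set `WFa` of `f` contains no
conormal to any line of `A`) together with the Kawai–Kashiwara–Hörmander unique
continuation property (an exterior conormal at a support boundary point not in `WFa`
forces the point off the support). Conclusion: `f = 0` on the union of the lines of `A`. -/
theorem support_theorem_xray_transform_R2
    (f : EuclideanSpace ℝ (Fin 2) → ℝ)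
    (hf : MeasureTheory.MemLp f 2 MeasureTheory.volume)
    (hsupp : HasCompactSupport f)
    (A : Set (EuclideanSpace ℝ (Fin 2) × EuclideanSpace ℝ (Fin 2)))
    (hAopen : IsOpen A)
    (hAunit : ∀ ℓ ∈ A, ‖ℓ.2‖ = 1)
    (hdeform : ∀ ℓ ∈ A, ∃ q : ℝ → EuclideanSpace ℝ (Fin 2) × EuclideanSpace ℝ (Fin 2),
      ContinuousOn q (Set.Icc 0 1) ∧ q 0 = ℓ ∧ (∀ s ∈ Set.Icc (0:ℝ) 1, q s ∈ A) ∧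
      ∀ t : ℝ, (q 1).1 + t • (q 1).2 ∉ tsupport f)
    (hvanish : ∀ ℓ ∈ A, (∫ t : ℝ, f (ℓ.1 + t • ℓ.2)) = 0)
    (WFa : Set (EuclideanSpace ℝ (Fin 2) × EuclideanSpace ℝ (Fin 2)))
    (hWF : ∀ ℓ ∈ A, ∀ (s : ℝ) (ξ : EuclideanSpace ℝ (Fin 2)),
      ξ ≠ 0 → ⟪ξ, ℓ.2⟫ = 0 → (ℓ.1 + s • ℓ.2, ξ) ∉ WFa)
    (hKKH : ∀ (p ξ : EuclideanSpace ℝ (Fin 2)), ξ ≠ 0 →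
      (∃ φ : EuclideanSpace ℝ (Fin 2) → ℝ, ContDiff ℝ 2 φ ∧ φ p = 0 ∧
        (∀ w, fderiv ℝ φ p w = ⟪ξ, w⟫) ∧
        ∃ U ∈ nhds p, ∀ y ∈ tsupport f ∩ U, φ y ≤ 0) →
      (p, ξ) ∉ WFa → p ∉ tsupport f) :
    ∀ ℓ ∈ A, ∀ t : ℝ, f (ℓ.1 + t • ℓ.2) = 0 := by
  intro ℓ hℓ t
  by_cases hp : ℓ.1 + t • ℓ.2 ∈ tsupport f
  swap
  · exact image_eq_zero_of_notMem_tsupport hp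
  exfalso
  set K := tsupport f with hK
  obtain ⟨q, hqc, hq0, hqA, hq1⟩ := hdeform ℓ hℓ
  obtain ⟨R, hR⟩ : ∃ R, K ⊆ Metric.closedBall 0 R := hsupp.isBounded.subset_closedBall 0
  obtain ⟨Z, hZ⟩ : ∃ Z, ∀ s ∈ Icc (0:ℝ) 1, ‖(q s).1‖ ≤ Z :=
    isCompact_Icc.exists_bound_of_continuousOn (continuous_fst.comp_continuousOn hqc)
  set M := R + Z with hM
  -- the compact incidence set
  set F : ℝ × ℝ → EuclideanSpace ℝ (Fin 2) :=
    fun su => (q su.1).1 + su.2 • (q su.1).2 with hF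
  have hq' : ContinuousOn (fun su : ℝ × ℝ => q su.1) (Icc 0 1 ×ˢ Icc (-M) M) :=
    hqc.comp continuousOn_fst (fun x hx => hx.1)
  have hFc : ContinuousOn F (Icc 0 1 ×ˢ Icc (-M) M) :=
    (continuous_fst.comp_continuousOn hq').add
      (continuous_snd.continuousOn.smul (continuous_snd.comp_continuousOn hq'))
  set C := (Icc (0:ℝ) 1 ×ˢ Icc (-M) M) ∩ F ⁻¹' K with hCdef
  have hCc : IsCompact C :=
    (isCompact_Icc.prod isCompact_Icc).of_isClosed_subset
      (hFc.preimage_isClosed_of_isClosed (isClosed_Icc.prod isClosed_Icc)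
        (isClosed_tsupport f)) inter_subset_left
  set B := Prod.fst '' C with hBdef
  have hBc : IsCompact B := hCc.image continuous_fst
  -- membership criterion for B
  have hmemB : ∀ s ∈ Icc (0:ℝ) 1, ∀ u : ℝ, (q s).1 + u • (q s).2 ∈ K → s ∈ B := by
    intro s hs u hu
    have hω : ‖(q s).2‖ = 1 := hAunit _ (hqA s hs)
    have hnormu : |u| ≤ M := by
      have h1 : ‖u • (q s).2‖ = |u| := by
        rw [norm_smul, hω, Real.norm_eq_abs, mul_one]
      have h2 : u • (q s).2 = ((q s).1 + u • (q s).2) - (q s).1 := by abel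
      have h3 : ‖(q s).1 + u • (q s).2‖ ≤ R := by
        have := hR hu
        simpa [Metric.mem_closedBall, dist_zero_right] using this
      have h4 : |u| ≤ ‖(q s).1 + u • (q s).2‖ + ‖(q s).1‖ := by
        calc |u| = ‖u • (q s).2‖ := h1.symm
          _ = ‖((q s).1 + u • (q s).2) - (q s).1‖ := by rw [← h2]
          _ ≤ ‖(q s).1 + u • (q s).2‖ + ‖(q s).1‖ := norm_sub_le _ _
      have := hZ s hs
      simp only [hM]; linarith
    exact ⟨(s, u), ⟨⟨hs, abs_le.1 hnormu⟩, hu⟩, rfl⟩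
  have hB0 : (0:ℝ) ∈ B := by
    refine hmemB 0 (Set.mem_Icc.mpr ⟨le_refl 0, zero_le_one⟩) t ?_
    rw [hq0]; exact hp
  -- the extremal parameter
  obtain ⟨su, hsuC, hsu⟩ := hBc.sSup_mem ⟨0, hB0⟩
  obtain ⟨⟨hsIcc, -⟩, hpK⟩ := hsuC
  have hsup : ∀ b ∈ B, b ≤ su.1 := fun b hb => hsu ▸ le_csSup hBc.bddAbove hb
  set p' : EuclideanSpace ℝ (Fin 2) := (q su.1).1 + su.2 • (q su.1).2 with hp'
  have hpK' : p' ∈ K := hpK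
  set ω : EuclideanSpace ℝ (Fin 2) := (q su.1).2 with hωdef
  have hℓA : q su.1 ∈ A := hqA su.1 hsIcc
  have hω1 : ‖ω‖ = 1 := hAunit _ hℓA
  have h1Icc : (1:ℝ) ∈ Icc (0:ℝ) 1 := ⟨zero_le_one, le_refl 1⟩
  have hω1' : ‖(q 1).2‖ = 1 := hAunit _ (hqA 1 h1Icc)
  -- the line q 1 misses p', so the signed distance there is nonzero
  set g1 : ℝ := ⟪xrayNu ((q 1).2), p' - (q 1).1⟫ with hg1def
  have hg1 : g1 ≠ 0 := by
    intro h0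
    have hd := xray_decomp ((q 1).2) (p' - (q 1).1) hω1' h0
    have : p' = (q 1).1 + ((q 1).2 0 * (p' - (q 1).1) 0 + (q 1).2 1 * (p' - (q 1).1) 1) • (q 1).2 := by
      rw [← hd]; abel
    exact hq1 _ (by rw [← this]; exact hpK')
  set e : ℝ := if 0 < g1 then 1 else -1 with hedef
  have he : e = 1 ∨ e = -1 := by
    by_cases h : 0 < g1 <;> simp [hedef, h]
  have he0 : e ≠ 0 := by rcases he with h | h <;> rw [h] <;> norm_num
  have hc : 0 < e * g1 := by
    by_cases h : 0 < g1
    · rw [hedef, if_pos h]; linarith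
    · rw [hedef, if_neg h]
      rcases lt_or_eq_of_le (not_lt.1 h) with h' | h'
      · linarith
      · exact absurd h' hg1
  set ξ : EuclideanSpace ℝ (Fin 2) := (-e) • xrayNu ω with hξdef
  have hξ0 : ξ ≠ 0 := smul_ne_zero (neg_ne_zero.2 he0) (xrayNu_ne_zero ω hω1)
  have hξω : ⟪ξ, ω⟫ = 0 := by
    rw [hξdef, real_inner_smul_left, xrayNu_inner_self, mul_zero]
  have hWFa : (p', ξ) ∉ WFa := hWF (q su.1) hℓA su.2 ξ hξ0 hξω
  -- the test function
  set φ : EuclideanSpace ℝ (Fin 2) → ℝ := fun y => ⟪ξ, y⟫ - ⟪ξ, p'⟫ with hφdef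
  have hφC : ContDiff ℝ 2 φ := (contDiff_const.inner ℝ contDiff_id).sub contDiff_const
  have hφ0 : φ p' = 0 := sub_self _
  have hD : HasFDerivAt φ (innerSL ℝ ξ) p' := ((innerSL ℝ ξ).hasFDerivAt).sub_const _
  have hfd : ∀ w, fderiv ℝ φ p' w = ⟪ξ, w⟫ := by
    intro w; rw [hD.fderiv]; rfl
  -- the one-sided support condition near p'
  have hU : ∀ y ∈ K ∩ Metric.ball p' (e * g1), φ y ≤ 0 := by
    intro y ⟨hyK, hyU⟩
    by_contra hpos
    push_neg at hpos
    have hside : e * ⟪xrayNu ω, y - p'⟫ < 0 := by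
      have hφy : φ y = (-e) * ⟪xrayNu ω, y - p'⟫ := by
        simp only [hφdef, hξdef, real_inner_smul_left, inner_sub_right]
        ring
      nlinarith [hpos.trans_eq hφy]
    set G : ℝ → ℝ := fun s => e * ⟪xrayNu ((q s).2), y - (q s).1⟫ with hGdef
    have hGc : ContinuousOn G (Icc 0 1) := by
      apply continuousOn_const.mul
      exact ((xrayNu_continuous.comp continuous_snd).comp_continuousOn hqc).inner
        (continuousOn_const.sub (continuous_fst.comp_continuousOn hqc))
    have hGa : G su.1 < 0 := by
      have hsplit : y - (q su.1).1 = (y - p') + su.2 • ω := by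
        rw [hp']; abel
      have : G su.1 = e * ⟪xrayNu ω, y - p'⟫ := by
        rw [hGdef]
        simp only [← hωdef, hsplit, inner_add_right, real_inner_smul_right,
          xrayNu_inner_self, mul_zero, add_zero]
      rw [this]; exact hside
    have hGb : 0 < G 1 := by
      have hsplit : y - (q 1).1 = (y - p') + (p' - (q 1).1) := by abel
      have hG1 : G 1 = e * ⟪xrayNu ((q 1).2), y - p'⟫ + e * g1 := by
        simp only [hGdef, hsplit, inner_add_right, ← hg1def]; ring
      have habs : |⟪xrayNu ((q 1).2), y - p'⟫| ≤ ‖y - p'‖ := by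
        have := abs_real_inner_le_norm (xrayNu ((q 1).2)) (y - p')
        rwa [xrayNu_norm _ hω1', one_mul] at this
      have hdist : ‖y - p'‖ < e * g1 := by
        have := hyU
        rwa [Metric.mem_ball, dist_eq_norm] at this
      have h1 := abs_le.1 habs
      rcases he with h | h <;> rw [h] at hG1 hdist <;> rw [hG1] <;>
        linarith [h1.1, h1.2, hdist]
    have hsub : Icc su.1 1 ⊆ Icc 0 1 := Icc_subset_Icc hsIcc.1 (le_refl 1)
    obtain ⟨s₃, hs₃, hGs₃⟩ :=
      intermediate_value_Icc hsIcc.2 (hGc.mono hsub) ⟨hGa.le, hGb.le⟩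
    have hs₃ne : s₃ ≠ su.1 := by
      rintro rfl
      rw [hGs₃] at hGa; exact lt_irrefl 0 hGa
    have hs₃Icc : s₃ ∈ Icc (0:ℝ) 1 := hsub hs₃
    have hinner3 : ⟪xrayNu ((q s₃).2), y - (q s₃).1⟫ = 0 := by
      have hGs : e * ⟪xrayNu ((q s₃).2), y - (q s₃).1⟫ = 0 := hGs₃
      exact (mul_eq_zero.1 hGs).resolve_left he0
    have hd := xray_decomp ((q s₃).2) (y - (q s₃).1) (hAunit _ (hqA s₃ hs₃Icc)) hinner3
    have hymem : (q s₃).1 + ((q s₃).2 0 * (y - (q s₃).1) 0 +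
        (q s₃).2 1 * (y - (q s₃).1) 1) • (q s₃).2 ∈ K := by
      rw [← hd]
      have : (q s₃).1 + (y - (q s₃).1) = y := by abel
      rw [this]; exact hyK
    have hs₃B : s₃ ∈ B := hmemB s₃ hs₃Icc _ hymem
    have := hsup s₃ hs₃B
    exact hs₃ne (le_antisymm this hs₃.1)
  -- conclude via the KKH unique continuation hypothesis
  have hout : p' ∉ K :=
    hKKH p' ξ hξ0 ⟨φ, hφC, hφ0, hfd,
      Metric.ball p' (e * g1), Metric.ball_mem_nhds _ hc, hU⟩ hWFa
  exact hout hpK'
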